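/- For every p ∈ ℕ₀, every integer s ≥ 1, every x ≥ 0 and every u ∈ ℝ, one has | ℙ( ⋂_{i=0}^{s−1} f^{-i}( R_{p,0}(u,x)ᶜ ) ) − ( 1 − s·ℙ( R_{p,0}(u,x) ) ) | ≤ s · Σ_{j=p+1}^{s−1} ℙ( Q_{p,0}^0(u) ∩ f^{-j}( U_{p,0}(u,x) ) ). -/

import Mathlib

open MeasureTheory Set Filter

noncomputable section

namespace Paper

variable {X : Type*}

/-- First hitting time (≥ 1) to `A`, valued in `ℕ∞` (`⊤` if the orbit never hits `A`). -/
def hitTime (f : X → X) (A : Set X) (x : X) : ℕ∞ :=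
  sInf ((fun j : ℕ => (j : ℕ∞)) '' {j : ℕ | 1 ≤ j ∧ f^[j] x ∈ A})

/-- The induced (first-hitting) map `F_A`. -/
def inducedMap (f : X → X) (A : Set X) (x : X) : X :=
  f^[(hitTime f A x).toNat] x

/-- Waiting times: `wait f A 1 = hitTime f A` and, for `i ≥ 1`,
`wait f A (i+1) x = hitTime f A ((inducedMap f A)^[i] x)`. -/
def wait (f : X → X) (A : Set X) (i : ℕ) (x : X) : ℕ∞ :=
  hitTime f A ((inducedMap f A)^[i - 1] x)

/-- `j`-th hitting time `r_A^j = w_A^1 + ⋯ + w_A^j`, with `r_A^0 = 0`. -/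
def hitIter (f : X → X) (A : Set X) (j : ℕ) (x : X) : ℕ∞ :=
  ∑ i ∈ Finset.range j, wait f A (i + 1) x

/-- `U(u) = {X₀ > u}`. -/
def Uset (φ : X → ℝ) (u : ℝ) : Set X := {x | u < φ x}

/-- `U_p^{(κ)}(u)`. -/
def Upk (f : X → X) (φ : X → ℝ) (p : ℕ) (u : ℝ) (κ : ℕ) : Set X :=
  Uset φ u ∩ ⋂ i ∈ Finset.Icc 1 κ, {x | wait f (Uset φ u) i x ≤ (p : ℕ∞)}

/-- `U_p^{(∞)}(u)`. -/
def UpInf (f : X → X) (φ : X → ℝ) (p : ℕ) (u : ℝ) : Set X :=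
  ⋂ κ, Upk f φ p u κ

/-- `Q_{p,0}^{κ}(u)`. -/
def Qk (f : X → X) (φ : X → ℝ) (p : ℕ) (u : ℝ) (κ : ℕ) : Set X :=
  Upk f φ p u κ ∩ {x | (p : ℕ∞) < wait f (Uset φ u) (κ + 1) x}

/-- Accumulated excess `Σ_{j=0}^{r_{U(u)}^{κ}} (X_j − u)_+` (the AOT mark over a cluster). -/
def excessSum (f : X → X) (φ : X → ℝ) (u : ℝ) (κ : ℕ) (x : X) : ℝ :=
  ∑ j ∈ Finset.range ((hitIter f (Uset φ u) κ x).toNat + 1), max (φ (f^[j] x) - u) 0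

/-- `U_{p,0}^{κ}(u,x)` for the AOT mark. -/
def Uk (f : X → X) (φ : X → ℝ) (p : ℕ) (u : ℝ) (κ : ℕ) (t : ℝ) : Set X :=
  Qk f φ p u κ ∩ {x | t < excessSum f φ u κ x}

/-- `U_{p,0}(u,x)`. -/
def U0 (f : X → X) (φ : X → ℝ) (p : ℕ) (u : ℝ) (t : ℝ) : Set X :=
  (⋃ κ, Uk f φ p u κ t) ∪ UpInf f φ p u

/-- `R_{p,0}(u,x)`. -/
def R0 (f : X → X) (φ : X → ℝ) (p : ℕ) (u : ℝ) (t : ℝ) : Set X :=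
  U0 f φ p u t ∩ {x | (p : ℕ∞) < hitTime f (U0 f φ p u t) x}

/-- `δ_{p,s,u}(x)` (with `δ_{0,s,u} := 0`). -/
def delta [MeasurableSpace X] (μ : Measure X) (f : X → X) (φ : X → ℝ) (p s : ℕ) (u t : ℝ) : ℝ :=
  if p = 0 then 0
  else (p : ℝ) * ∑ κ ∈ Finset.range (s / p + 1), ((κ : ℝ) + 1) * (μ (Uk f φ p u κ t)).toReal
      + ((s : ℝ) + (p : ℝ)) * (∑' κ : ℕ, μ (Uk f φ p u (κ + s / p + 1) t)).toReal


section AuxLemmas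

variable {f : X → X} {A : Set X} {x : X}



variable {X : Type*}

variable {f : X → X} {A : Set X} {x : X}

lemma hitTime_le_iff {n : ℕ} :
    hitTime f A x ≤ (n : ℕ∞) ↔ ∃ j, 1 ≤ j ∧ j ≤ n ∧ f^[j] x ∈ A := by
  constructor
  · intro h
    by_contra hc
    push_neg at hc
    have hlb : ((n : ℕ∞) + 1) ≤ hitTime f A x := by
      apply le_sInf
      rintro b ⟨j, ⟨hj1, hjA⟩, rfl⟩
      have hj : n + 1 ≤ j := by
        by_contra h2
        push_neg at h2
        exact hc j hj1 (by omega) hjA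
      show ((n : ℕ∞) + 1) ≤ (j : ℕ∞)
      exact_mod_cast hj
    have h2 := hlb.trans h
    have : (n : ℕ∞) + 1 = ((n + 1 : ℕ) : ℕ∞) := by push_cast; ring
    rw [this] at h2
    have : n + 1 ≤ n := by exact_mod_cast h2
    omega
  · rintro ⟨j, hj1, hjn, hjA⟩
    refine le_trans (sInf_le ⟨j, ⟨hj1, hjA⟩, rfl⟩) ?_
    show (j : ℕ∞) ≤ (n : ℕ∞)
    exact_mod_cast hjn

lemma hitTime_min {m j : ℕ} (h : hitTime f A x = (m : ℕ∞)) (hj1 : 1 ≤ j)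
    (hjA : f^[j] x ∈ A) : m ≤ j := by
  have h2 : hitTime f A x ≤ (j : ℕ∞) := sInf_le ⟨j, ⟨hj1, hjA⟩, rfl⟩
  rw [h] at h2
  exact_mod_cast h2

lemma hitTime_mem {m : ℕ} (h : hitTime f A x = (m : ℕ∞)) :
    1 ≤ m ∧ f^[m] x ∈ A := by
  obtain ⟨j, hj1, hjm, hjA⟩ := hitTime_le_iff.mp h.le
  have := hitTime_min h hj1 hjA
  have hjm' : j = m := le_antisymm hjm this
  subst hjm'
  exact ⟨hj1, hjA⟩

lemma hitTime_ne_top_iff :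
    hitTime f A x ≠ ⊤ ↔ ∃ m : ℕ, hitTime f A x = (m : ℕ∞) := by
  constructor
  · intro h
    obtain ⟨m, hm⟩ := WithTop.ne_top_iff_exists.mp h
    exact ⟨m, hm.symm⟩
  · rintro ⟨m, hm⟩; simp [hm]

lemma inducedMap_eq {m : ℕ} (h : hitTime f A x = (m : ℕ∞)) :
    inducedMap f A x = f^[m] x := by
  unfold inducedMap
  rw [h, ENat.toNat_coe]

lemma wait_one : wait f A 1 x = hitTime f A x := by
  simp [wait]

lemma wait_shift {i : ℕ} (hi : 1 ≤ i) (m : ℕ) (x : X) :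
    wait f A i ((inducedMap f A)^[m] x) = wait f A (m + i) x := by
  unfold wait
  rw [← Function.iterate_add_apply]
  congr 2
  omega

lemma hitIter_zero : hitIter f A 0 x = 0 := by simp [hitIter]

lemma hitIter_one : hitIter f A 1 x = hitTime f A x := by
  simp [hitIter, wait_one]

lemma hitIter_add (m j : ℕ) (x : X) :
    hitIter f A (m + j) x = hitIter f A m x + hitIter f A j ((inducedMap f A)^[m] x) := by
  unfold hitIter
  rw [Finset.sum_range_add]
  congr 1
  refine Finset.sum_congr rfl fun i _ => ?_
  rw [wait_shift (by omega) m x]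
  congr 1

lemma hitIter_succ' (κ : ℕ) (x : X) :
    hitIter f A (1 + κ) x = hitTime f A x + hitIter f A κ (inducedMap f A x) := by
  rw [hitIter_add 1 κ x, hitIter_one, Function.iterate_one]

lemma hitIter_mono {m κ : ℕ} (h : m ≤ κ) : hitIter f A m x ≤ hitIter f A κ x := by
  unfold hitIter
  exact Finset.sum_le_sum_of_subset (Finset.range_subset_range.mpr h)


variable {X : Type*} {f : X → X} {A : Set X} {x : X}

lemma orbit_struct (f : X → X) (A : Set X) :
    ∀ (κ : ℕ) (x : X), (∀ i, 1 ≤ i → i ≤ κ → wait f A i x ≠ ⊤) →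
    ∃ ρ : ℕ, hitIter f A κ x = (ρ : ℕ∞) ∧ (inducedMap f A)^[κ] x = f^[ρ] x ∧
      (∀ j, 1 ≤ j → j ≤ ρ → f^[j] x ∈ A →
        ∃ m, 1 ≤ m ∧ m ≤ κ ∧ hitIter f A m x = (j : ℕ∞)) ∧
      (1 ≤ κ → f^[ρ] x ∈ A) := by
  intro κ
  induction κ with
  | zero =>
    intro x _
    refine ⟨0, by simp [hitIter_zero], by simp, ?_, by omega⟩
    intro j hj1 hj0 _
    omega
  | succ κ IH =>
    intro x hW
    have hW1 : hitTime f A x ≠ ⊤ := by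
      have := hW 1 le_rfl (by omega)
      rwa [wait_one] at this
    obtain ⟨w, hw⟩ := hitTime_ne_top_iff.mp hW1
    obtain ⟨hw1, hwA⟩ := hitTime_mem hw
    have hFx : inducedMap f A x = f^[w] x := inducedMap_eq hw
    have hWy : ∀ i, 1 ≤ i → i ≤ κ → wait f A i (inducedMap f A x) ≠ ⊤ := by
      intro i hi1 hiκ
      have := wait_shift (f := f) (A := A) hi1 1 x
      rw [Function.iterate_one] at this
      rw [this]
      exact hW (1 + i) (by omega) (by omega)
    obtain ⟨ρ', h1, h2, h3, h4⟩ := IH (inducedMap f A x) hWy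
    refine ⟨w + ρ', ?_, ?_, ?_, ?_⟩
    · have : hitIter f A (1 + κ) x = hitTime f A x + hitIter f A κ (inducedMap f A x) :=
        hitIter_succ' κ x
      rw [show κ + 1 = 1 + κ by omega, this, hw, h1]
      push_cast
      ring
    · rw [Function.iterate_succ_apply, h2, hFx, ← Function.iterate_add_apply]
      congr 1
      omega
    · intro j hj1 hjρ hjA
      rcases lt_trichotomy j w with hlt | heq | hgt
      · exact absurd (hitTime_min hw hj1 hjA) (by omega)
      · exact ⟨1, le_rfl, by omega, by rw [hitIter_one, hw, heq]⟩
      · have hj' : f^[j - w] (inducedMap f A x) ∈ A := by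
          rw [hFx, ← Function.iterate_add_apply, show j - w + w = j by omega]
          exact hjA
        obtain ⟨m', hm1, hmκ, hmit⟩ := h3 (j - w) (by omega) (by omega) hj'
        refine ⟨m' + 1, by omega, by omega, ?_⟩
        have : hitIter f A (1 + m') x = hitTime f A x + hitIter f A m' (inducedMap f A x) :=
          hitIter_succ' m' x
        rw [show m' + 1 = 1 + m' by omega, this, hw, hmit]
        have : w + (j - w) = j := by omega
        exact_mod_cast congrArg (fun n : ℕ => (n : ℕ∞)) this
    · intro _
      rcases Nat.eq_zero_or_pos κ with hκ0 | hκ1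
      · subst hκ0
        have hρ0 : ρ' = 0 := by
          rw [hitIter_zero] at h1
          exact_mod_cast h1.symm
        subst hρ0
        simpa using hwA
      · have h5 := h4 hκ1
        rw [hFx, ← Function.iterate_add_apply] at h5
        rwa [show w + ρ' = ρ' + w by omega]


variable {φ : X → ℝ} {p : ℕ} {u t : ℝ}

variable {X : Type*}

variable {f : X → X} {φ : X → ℝ} {p : ℕ} {u t : ℝ} {x : X}

lemma mem_Upk {κ : ℕ} :
    x ∈ Upk f φ p u κ ↔ u < φ x ∧ ∀ i, 1 ≤ i → i ≤ κ → wait f (Uset φ u) i x ≤ (p : ℕ∞) := by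
  simp [Upk, Uset, Set.mem_iInter, Finset.mem_Icc, and_imp]

lemma mem_Qk {κ : ℕ} :
    x ∈ Qk f φ p u κ ↔ (u < φ x ∧ ∀ i, 1 ≤ i → i ≤ κ → wait f (Uset φ u) i x ≤ (p : ℕ∞)) ∧
      (p : ℕ∞) < wait f (Uset φ u) (κ + 1) x := by
  rw [Qk, Set.mem_inter_iff, mem_Upk]; rfl

lemma mem_UpInf :
    x ∈ UpInf f φ p u ↔ u < φ x ∧ ∀ i, 1 ≤ i → wait f (Uset φ u) i x ≤ (p : ℕ∞) := by
  constructor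
  · intro h
    have h' : ∀ κ, x ∈ Upk f φ p u κ := Set.mem_iInter.mp h
    exact ⟨(mem_Upk.mp (h' 0)).1, fun i hi1 => (mem_Upk.mp (h' i)).2 i hi1 le_rfl⟩
  · intro ⟨h1, h2⟩
    exact Set.mem_iInter.mpr fun κ => mem_Upk.mpr ⟨h1, fun i hi1 _ => h2 i hi1⟩

lemma U0_subset_Uset : U0 f φ p u t ⊆ Uset φ u := by
  rintro x (hx | hx)
  · obtain ⟨κ, hκ⟩ := Set.mem_iUnion.mp hx
    exact (mem_Qk.mp hκ.1).1.1
  · exact (mem_UpInf.mp hx).1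

lemma R0_subset : R0 f φ p u t ⊆ U0 f φ p u t := Set.inter_subset_left

/-- The key combinatorial lemma. -/
lemma key {k : ℕ} (hx : x ∈ R0 f φ p u t) (hk : p < k)
    (hfk : f^[k] x ∈ U0 f φ p u t) :
    ∃ d, d + p + 1 ≤ k ∧ f^[d] x ∈ Qk f φ p u 0 := by
  obtain ⟨hxU, hxh⟩ := hx
  simp only [Set.mem_setOf_eq] at hxh
  have h_hit : ∀ j, 1 ≤ j → j ≤ p → f^[j] x ∉ U0 f φ p u t := by
    intro j hj1 hjp hjU
    have hle : hitTime f (U0 f φ p u t) x ≤ (p : ℕ∞) := by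
      refine le_trans (hitTime_le_iff.mpr ⟨j, hj1, le_rfl, hjU⟩) ?_
      exact_mod_cast hjp
    exact absurd hle (not_le.mpr hxh)
  -- x is not in UpInf
  have hnotInf : x ∉ UpInf f φ p u := by
    intro hInf
    obtain ⟨hxA, hwaits⟩ := mem_UpInf.mp hInf
    have hW1 : hitTime f (Uset φ u) x ≤ (p : ℕ∞) := by
      have h := hwaits 1 le_rfl
      rwa [wait_one] at h
    obtain ⟨w, hw⟩ := hitTime_ne_top_iff.mp (ne_top_of_le_ne_top (by simp) hW1)
    obtain ⟨hw1, hwA⟩ := hitTime_mem hw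
    have hwp : w ≤ p := by rw [hw] at hW1; exact_mod_cast hW1
    have hFeq : inducedMap f (Uset φ u) x = f^[w] x := inducedMap_eq hw
    have hFU : f^[w] x ∈ UpInf f φ p u := by
      refine mem_UpInf.mpr ⟨by rw [← hFeq]; rw [hFeq]; exact hwA, ?_⟩
      intro i hi1
      have hsh := wait_shift (f := f) (A := Uset φ u) hi1 1 x
      rw [Function.iterate_one, hFeq] at hsh
      rw [hsh]
      exact hwaits (1 + i) (by omega)
    exact h_hit w hw1 hwp (Set.mem_union_right _ hFU)
  have hxκ : ∃ κ, x ∈ Uk f φ p u κ t := by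
    rcases hxU with h | h
    · exact Set.mem_iUnion.mp h
    · exact absurd h hnotInf
  obtain ⟨κ, hxQ, hxE⟩ := hxκ
  obtain ⟨⟨hxA, hwaits⟩, hbig⟩ := mem_Qk.mp hxQ
  simp only [Set.mem_setOf_eq] at hxE
  have hWne : ∀ i, 1 ≤ i → i ≤ κ → wait f (Uset φ u) i x ≠ ⊤ := by
    intro i h1 h2 htop
    have h := hwaits i h1 h2
    simp [htop] at h
  obtain ⟨d, hd1, hd2, hclass, hdA'⟩ := orbit_struct f (Uset φ u) κ x hWne
  have hdA : f^[d] x ∈ Uset φ u := by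
    rcases Nat.eq_zero_or_pos κ with h0 | h1
    · subst h0
      have hd0 : d = 0 := by rw [hitIter_zero] at hd1; exact_mod_cast hd1.symm
      subst hd0; simpa [Uset] using hxA
    · exact hdA' h1
  have hshκ : wait f (Uset φ u) 1 (f^[d] x) = wait f (Uset φ u) (κ + 1) x := by
    rw [← hd2]; exact wait_shift le_rfl κ x
  have hdQ : f^[d] x ∈ Qk f φ p u 0 := by
    refine mem_Qk.mpr ⟨⟨hdA, fun i hi1 hi0 => absurd hi0 (by omega)⟩, ?_⟩
    show (p : ℕ∞) < wait f (Uset φ u) 1 (f^[d] x)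
    rw [hshκ]
    exact hbig
  refine ⟨d, ?_, hdQ⟩
  by_contra hc
  push_neg at hc
  have hkA : f^[k] x ∈ Uset φ u := U0_subset_Uset hfk
  rcases lt_or_ge d k with hdk | hkd
  ·
    have hj : f^[k - d] (f^[d] x) ∈ Uset φ u := by
      rw [← Function.iterate_add_apply, show k - d + d = k by omega]
      exact hkA
    have hle : hitTime f (Uset φ u) (f^[d] x) ≤ ((p : ℕ) : ℕ∞) := by
      refine le_trans (hitTime_le_iff.mpr ⟨k - d, by omega, le_rfl, hj⟩) ?_
      exact_mod_cast (by omega : k - d ≤ p)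
    rw [← wait_one, hshκ] at hle
    exact absurd hle (not_le.mpr hbig)
  · -- k ≤ d : the deep case
    obtain ⟨m, hm1, hmκ, hmit⟩ := hclass k (by omega) hkd hkA
    obtain ⟨ρm, hρ1, hρ2, -, -⟩ := orbit_struct f (Uset φ u) m x
      (fun i h1 h2 => hWne i h1 (by omega))
    have hρk : ρm = k := by
      rw [hmit] at hρ1; exact_mod_cast hρ1.symm
    rw [hρk] at hρ2
    have hwz : ∀ i, 1 ≤ i → wait f (Uset φ u) i (f^[k] x) = wait f (Uset φ u) (m + i) x := by
      intro i hi1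
      rw [← hρ2]
      exact wait_shift hi1 m x
    have hzU : f^[k] x ∈ (⋃ κ', Uk f φ p u κ' t) := by
      rcases hfk with h | h
      · exact h
      · exfalso
        have hz := (mem_UpInf.mp h).2 (κ + 1 - m) (by omega)
        rw [hwz (κ + 1 - m) (by omega), show m + (κ + 1 - m) = κ + 1 by omega] at hz
        exact absurd hz (not_le.mpr hbig)
    obtain ⟨κ', hzQ, hzE⟩ := Set.mem_iUnion.mp hzU
    obtain ⟨⟨hzA, hzwaits⟩, hzbig⟩ := mem_Qk.mp hzQ
    simp only [Set.mem_setOf_eq] at hzE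
    have hκ' : κ' = κ - m := by
      rcases lt_trichotomy κ' (κ - m) with h | h | h
      · exfalso
        rw [hwz (κ' + 1) (by omega)] at hzbig
        exact absurd (hwaits (m + (κ' + 1)) (by omega) (by omega)) (not_le.mpr hzbig)
      · exact h
      · exfalso
        have h2 := hzwaits (κ - m + 1) (by omega) (by omega)
        rw [hwz (κ - m + 1) (by omega), show m + (κ - m + 1) = κ + 1 by omega] at h2
        exact absurd h2 (not_le.mpr hbig)
    subst hκ'
    have hadd : hitIter f (Uset φ u) κ x
        = hitIter f (Uset φ u) m x + hitIter f (Uset φ u) (κ - m) (f^[k] x) := by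
      rw [← hρ2, ← hitIter_add, show m + (κ - m) = κ by omega]
    rw [hd1, hmit] at hadd
    have hit_ne : hitIter f (Uset φ u) (κ - m) (f^[k] x) ≠ ⊤ := by
      intro h; rw [h] at hadd; simp at hadd
    obtain ⟨e, he0⟩ := WithTop.ne_top_iff_exists.mp hit_ne
    have he : hitIter f (Uset φ u) (κ - m) (f^[k] x) = ((e : ℕ) : ℕ∞) := he0.symm
    rw [he] at hadd
    have hke : k + e = d := by exact_mod_cast hadd.symm
    -- first return time w of x
    have hκ1 : 1 ≤ κ := by omega
    have hW1 : hitTime f (Uset φ u) x ≠ ⊤ := by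
      have h := hWne 1 le_rfl hκ1; rwa [wait_one] at h
    obtain ⟨w, hw⟩ := hitTime_ne_top_iff.mp hW1
    obtain ⟨hw1, hwAmem⟩ := hitTime_mem hw
    have hwp : w ≤ p := by
      have h := hwaits 1 le_rfl hκ1
      rw [wait_one, hw] at h
      exact_mod_cast h
    have hFx : inducedMap f (Uset φ u) x = f^[w] x := inducedMap_eq hw
    have hadd2 : hitIter f (Uset φ u) κ x
        = hitTime f (Uset φ u) x + hitIter f (Uset φ u) (κ - 1) (f^[w] x) := by
      rw [← hFx, ← hitIter_succ' (κ - 1) x, show 1 + (κ - 1) = κ by omega]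
    rw [hd1, hw] at hadd2
    have hit_ne2 : hitIter f (Uset φ u) (κ - 1) (f^[w] x) ≠ ⊤ := by
      intro h; rw [h] at hadd2; simp at hadd2
    obtain ⟨e', he0'⟩ := WithTop.ne_top_iff_exists.mp hit_ne2
    have he' : hitIter f (Uset φ u) (κ - 1) (f^[w] x) = ((e' : ℕ) : ℕ∞) := he0'.symm
    rw [he'] at hadd2
    have hwe : w + e' = d := by exact_mod_cast hadd2.symm
    have hwk : w ≤ k := by
      have hmono : hitIter f (Uset φ u) 1 x ≤ hitIter f (Uset φ u) m x := hitIter_mono hm1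
      rw [hitIter_one, hw, hmit] at hmono
      exact_mod_cast hmono
    -- rewrite the excess of f^[k] x
    have hzE' : t < ∑ j ∈ Finset.range (e + 1), max (φ (f^[j + k] x) - u) 0 := by
      unfold excessSum at hzE
      rw [he, ENat.toNat_coe] at hzE
      have hcongr : ∑ j ∈ Finset.range (e + 1), max (φ (f^[j] (f^[k] x)) - u) 0 =
          ∑ j ∈ Finset.range (e + 1), max (φ (f^[j + k] x) - u) 0 :=
        Finset.sum_congr rfl fun j _ => by rw [Function.iterate_add_apply]
      rwa [hcongr] at hzE
    -- compare the two sums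
    obtain ⟨l, hl⟩ : ∃ l, k = w + l := ⟨k - w, by omega⟩
    have hsum : ∑ j ∈ Finset.range (e + 1), max (φ (f^[j + k] x) - u) 0 ≤
        ∑ j ∈ Finset.range (e' + 1), max (φ (f^[j + w] x) - u) 0 := by
      have hsplit : e' + 1 = l + (e + 1) := by omega
      have h1 : (0 : ℝ) ≤ ∑ j ∈ Finset.range l, max (φ (f^[j + w] x) - u) 0 :=
        Finset.sum_nonneg fun j _ => le_max_right _ _
      have h2 : ∑ j ∈ Finset.range (e + 1), max (φ (f^[l + j + w] x) - u) 0 =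
          ∑ j ∈ Finset.range (e + 1), max (φ (f^[j + k] x) - u) 0 := by
        refine Finset.sum_congr rfl fun j _ => ?_
        rw [show l + j + w = j + k by omega]
      have h3 : ∑ j ∈ Finset.range (e' + 1), max (φ (f^[j + w] x) - u) 0 =
          ∑ j ∈ Finset.range l, max (φ (f^[j + w] x) - u) 0 +
          ∑ j ∈ Finset.range (e + 1), max (φ (f^[l + j + w] x) - u) 0 := by
        rw [hsplit]
        exact Finset.sum_range_add (fun j => max (φ (f^[j + w] x) - u) 0) l (e + 1)
      rw [h3, h2]
      linarith
    -- f^[w] x ∈ U0, contradiction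
    have hFxU : f^[w] x ∈ U0 f φ p u t := by
      apply Set.mem_union_left
      refine Set.mem_iUnion.mpr ⟨κ - 1, ?_, ?_⟩
      · refine mem_Qk.mpr ⟨⟨hwAmem, ?_⟩, ?_⟩
        · intro i hi1 hiκ
          have hsh := wait_shift (f := f) (A := Uset φ u) hi1 1 x
          rw [Function.iterate_one, hFx] at hsh
          rw [hsh]
          exact hwaits (1 + i) (by omega) (by omega)
        · have hsh := wait_shift (f := f) (A := Uset φ u) (by omega : 1 ≤ κ - 1 + 1) 1 x
          rw [Function.iterate_one, hFx] at hsh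
          rw [hsh, show 1 + (κ - 1 + 1) = κ + 1 by omega]
          exact hbig
      · show t < excessSum f φ u (κ - 1) (f^[w] x)
        unfold excessSum
        rw [he', ENat.toNat_coe]
        calc t < ∑ j ∈ Finset.range (e + 1), max (φ (f^[j + k] x) - u) 0 := hzE'
        _ ≤ ∑ j ∈ Finset.range (e' + 1), max (φ (f^[j + w] x) - u) 0 := hsum
        _ = ∑ j ∈ Finset.range (e' + 1), max (φ (f^[j] (f^[w] x)) - u) 0 :=
          Finset.sum_congr rfl fun j _ => by rw [Function.iterate_add_apply]
    exact h_hit w hw1 hwp hFxU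


section Meas
variable [MeasurableSpace X]

variable {X : Type*} [MeasurableSpace X] {f : X → X} {A : Set X} {φ : X → ℝ} {p : ℕ} {u t : ℝ}

lemma measurableSet_hitTime_le (hf : Measurable f) (hA : MeasurableSet A) (n : ℕ) :
    MeasurableSet {x | hitTime f A x ≤ (n : ℕ∞)} := by
  have hset : {x | hitTime f A x ≤ (n : ℕ∞)} = ⋃ j ∈ Finset.Icc 1 n, f^[j] ⁻¹' A := by
    ext x
    simp only [Set.mem_setOf_eq, Set.mem_iUnion, Set.mem_preimage, Finset.mem_Icc,
      hitTime_le_iff]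
    constructor
    · rintro ⟨j, h1, h2, h3⟩; exact ⟨j, ⟨h1, h2⟩, h3⟩
    · rintro ⟨j, ⟨h1, h2⟩, h3⟩; exact ⟨j, h1, h2, h3⟩
  rw [hset]
  exact MeasurableSet.biUnion (Finset.Icc 1 n).countable_toSet
    (fun j _ => (hf.iterate j) hA)

lemma measurableSet_hitTime_eq (hf : Measurable f) (hA : MeasurableSet A) (m : ℕ) :
    MeasurableSet {x | hitTime f A x = (m : ℕ∞)} := by
  rcases Nat.eq_zero_or_pos m with h0 | h1
  · subst h0
    have : {x | hitTime f A x = ((0 : ℕ) : ℕ∞)} = ∅ := by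
      ext x
      simp only [Set.mem_setOf_eq, Set.mem_empty_iff_false, iff_false]
      intro h
      have := (hitTime_mem h).1
      omega
    rw [this]; exact MeasurableSet.empty
  · have hset : {x | hitTime f A x = (m : ℕ∞)} =
        {x | hitTime f A x ≤ (m : ℕ∞)} \ {x | hitTime f A x ≤ ((m - 1 : ℕ) : ℕ∞)} := by
      ext x
      simp only [Set.mem_setOf_eq, Set.mem_diff, not_le]
      constructor
      · intro h
        refine ⟨le_of_eq h, ?_⟩
        rw [h]
        exact_mod_cast (by omega : m - 1 < m)
      · rintro ⟨h1, h2⟩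
        obtain ⟨j, hj1, hjm, hjA⟩ := hitTime_le_iff.mp h1
        have hle : hitTime f A x ≤ (j : ℕ∞) := hitTime_le_iff.mpr ⟨j, hj1, le_rfl, hjA⟩
        obtain ⟨c, hc⟩ := hitTime_ne_top_iff.mp (ne_top_of_le_ne_top (by simp) hle)
        have hcm : c ≤ m := by
          rw [hc] at h1; exact_mod_cast h1
        have hmc : m - 1 < c := by
          rw [hc] at h2; exact_mod_cast h2
        rw [hc]
        congr 1
        omega
    rw [hset]
    exact (measurableSet_hitTime_le hf hA m).diff (measurableSet_hitTime_le hf hA (m - 1))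

lemma measurableSet_hitTime_top (hf : Measurable f) (hA : MeasurableSet A) :
    MeasurableSet {x | hitTime f A x = ⊤} := by
  have hset : {x | hitTime f A x = ⊤} = (⋃ n : ℕ, {x | hitTime f A x = (n : ℕ∞)})ᶜ := by
    ext x
    simp only [Set.mem_setOf_eq, Set.mem_compl_iff, Set.mem_iUnion]
    constructor
    · rintro h ⟨n, hn⟩; rw [h] at hn; exact (by simp : ((n:ℕ∞) ≠ ⊤)) hn.symm
    · intro h
      by_contra hne
      obtain ⟨n, hn⟩ := hitTime_ne_top_iff.mp hne
      exact h ⟨n, hn⟩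
  rw [hset]
  exact (MeasurableSet.iUnion fun n => measurableSet_hitTime_eq hf hA n).compl

lemma measurable_inducedMap (hf : Measurable f) (hA : MeasurableSet A) :
    Measurable (inducedMap f A) := by
  intro S hS
  have hset : inducedMap f A ⁻¹' S =
      ({x | hitTime f A x = ⊤} ∩ S) ∪
        ⋃ m : ℕ, ({x | hitTime f A x = (m : ℕ∞)} ∩ f^[m] ⁻¹' S) := by
    ext x
    simp only [Set.mem_preimage, Set.mem_union, Set.mem_inter_iff, Set.mem_iUnion,
      Set.mem_setOf_eq]
    by_cases htop : hitTime f A x = ⊤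
    · have hind : inducedMap f A x = x := by
        unfold inducedMap
        rw [htop]
        simp
      rw [hind]
      constructor
      · intro h; exact Or.inl ⟨htop, h⟩
      · rintro (⟨-, h⟩ | ⟨m, hm, -⟩)
        · exact h
        · rw [htop] at hm; exact absurd hm.symm (by simp)
    · obtain ⟨m, hm⟩ := hitTime_ne_top_iff.mp htop
      have hind : inducedMap f A x = f^[m] x := inducedMap_eq hm
      rw [hind]
      constructor
      · intro h; exact Or.inr ⟨m, hm, h⟩
      · rintro (⟨h, -⟩ | ⟨m', hm', h⟩)
        · exact absurd h htop
        · have : m' = m := by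
            rw [hm] at hm'; exact_mod_cast hm'.symm
          subst this
          exact h
  rw [hset]
  exact ((measurableSet_hitTime_top hf hA).inter hS).union
    (MeasurableSet.iUnion fun m =>
      (measurableSet_hitTime_eq hf hA m).inter ((hf.iterate m) hS))

lemma measurableSet_wait_le (hf : Measurable f) (hA : MeasurableSet A) (i : ℕ) (n : ℕ) :
    MeasurableSet {x | wait f A i x ≤ (n : ℕ∞)} := by
  have hset : {x | wait f A i x ≤ (n : ℕ∞)} =
      (inducedMap f A)^[i - 1] ⁻¹' {x | hitTime f A x ≤ (n : ℕ∞)} := rfl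
  rw [hset]
  exact ((measurable_inducedMap hf hA).iterate (i - 1)) (measurableSet_hitTime_le hf hA n)

lemma measurableSet_wait_eq (hf : Measurable f) (hA : MeasurableSet A) (i : ℕ) (n : ℕ) :
    MeasurableSet {x | wait f A i x = (n : ℕ∞)} := by
  have hset : {x | wait f A i x = (n : ℕ∞)} =
      (inducedMap f A)^[i - 1] ⁻¹' {x | hitTime f A x = (n : ℕ∞)} := rfl
  rw [hset]
  exact ((measurable_inducedMap hf hA).iterate (i - 1)) (measurableSet_hitTime_eq hf hA n)

lemma measurableSet_hitIter_eq (hf : Measurable f) (hA : MeasurableSet A) (κ : ℕ) (n : ℕ) :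
    MeasurableSet {x | hitIter f A κ x = (n : ℕ∞)} := by
  induction κ generalizing n with
  | zero =>
    by_cases h0 : n = 0
    · subst h0
      have : {x | hitIter f A 0 x = ((0 : ℕ) : ℕ∞)} = Set.univ := by
        ext x; simp [hitIter_zero]
      rw [this]; exact MeasurableSet.univ
    · have : {x | hitIter f A 0 x = (n : ℕ∞)} = ∅ := by
        ext x
        simp only [hitIter_zero, Set.mem_setOf_eq, Set.mem_empty_iff_false, iff_false]
        intro h
        exact h0 (by exact_mod_cast h.symm)
      rw [this]; exact MeasurableSet.empty
  | succ κ IH =>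
    have hset : {x | hitIter f A (κ + 1) x = (n : ℕ∞)} =
        ⋃ a ∈ Finset.range (n + 1),
          ({x | hitIter f A κ x = (a : ℕ∞)} ∩ {x | wait f A (κ + 1) x = ((n - a : ℕ) : ℕ∞)}) := by
      ext x
      have hsplit : hitIter f A (κ + 1) x = hitIter f A κ x + wait f A (κ + 1) x := by
        unfold hitIter
        rw [Finset.sum_range_succ]
      simp only [Set.mem_setOf_eq, Set.mem_iUnion, Set.mem_inter_iff, Finset.mem_range, hsplit]
      constructor
      · intro h
        have h1 : hitIter f A κ x ≠ ⊤ := by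
          intro hc; rw [hc] at h; simp at h
        have h2 : wait f A (κ + 1) x ≠ ⊤ := by
          intro hc; rw [hc] at h; simp at h
        obtain ⟨a, ha0⟩ := WithTop.ne_top_iff_exists.mp h1
        obtain ⟨b, hb0⟩ := WithTop.ne_top_iff_exists.mp h2
        have ha : hitIter f A κ x = ((a : ℕ) : ℕ∞) := ha0.symm
        have hb : wait f A (κ + 1) x = ((b : ℕ) : ℕ∞) := hb0.symm
        rw [ha, hb] at h
        have hab : a + b = n := by exact_mod_cast h
        exact ⟨a, by omega, ha, by rw [hb]; congr 1; omega⟩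
      · rintro ⟨a, han, ha, hb⟩
        rw [ha, hb]
        have : a + (n - a) = n := by omega
        exact_mod_cast congrArg (fun m : ℕ => (m : ℕ∞)) this
    rw [hset]
    exact MeasurableSet.biUnion (Finset.range (n + 1)).countable_toSet
      (fun a _ => (IH a).inter (measurableSet_wait_eq hf hA (κ + 1) (n - a)))

lemma measurableSet_hitIter_top (hf : Measurable f) (hA : MeasurableSet A) (κ : ℕ) :
    MeasurableSet {x | hitIter f A κ x = ⊤} := by
  have hset : {x | hitIter f A κ x = ⊤} = (⋃ n : ℕ, {x | hitIter f A κ x = (n : ℕ∞)})ᶜ := by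
    ext x
    simp only [Set.mem_setOf_eq, Set.mem_compl_iff, Set.mem_iUnion]
    constructor
    · rintro h ⟨n, hn⟩; rw [h] at hn; exact (by simp : ((n:ℕ∞) ≠ ⊤)) hn.symm
    · intro h
      by_contra hne
      obtain ⟨n, hn⟩ := WithTop.ne_top_iff_exists.mp hne
      exact h ⟨n, hn.symm⟩
  rw [hset]
  exact (MeasurableSet.iUnion fun n => measurableSet_hitIter_eq hf hA κ n).compl

lemma measurableSet_Uset (hφ : Measurable φ) : MeasurableSet (Uset φ u) :=
  measurableSet_lt measurable_const hφ

lemma measurableSet_Upk (hf : Measurable f) (hφ : Measurable φ) (κ : ℕ) :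
    MeasurableSet (Upk f φ p u κ) := by
  refine (measurableSet_Uset hφ).inter ?_
  exact MeasurableSet.biInter (Finset.Icc 1 κ).countable_toSet
    (fun i _ => measurableSet_wait_le hf (measurableSet_Uset hφ) i p)

lemma measurableSet_UpInf (hf : Measurable f) (hφ : Measurable φ) :
    MeasurableSet (UpInf f φ p u (X := X)) :=
  MeasurableSet.iInter fun κ => measurableSet_Upk hf hφ κ

lemma measurableSet_Qk (hf : Measurable f) (hφ : Measurable φ) (κ : ℕ) :
    MeasurableSet (Qk f φ p u κ) := by
  refine (measurableSet_Upk hf hφ κ).inter ?_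
  have : {x | (p : ℕ∞) < wait f (Uset φ u) (κ + 1) x} =
      {x | wait f (Uset φ u) (κ + 1) x ≤ (p : ℕ∞)}ᶜ := by
    ext x; simp [not_le]
  rw [this]
  exact (measurableSet_wait_le hf (measurableSet_Uset hφ) (κ + 1) p).compl

lemma measurableSet_excess_gt (hf : Measurable f) (hφ : Measurable φ) (κ : ℕ) :
    MeasurableSet {x | t < excessSum f φ u κ x} := by
  have hE : ∀ n : ℕ, MeasurableSet {x : X | t < ∑ j ∈ Finset.range (n + 1), max (φ (f^[j] x) - u) 0} := by
    intro n
    apply measurableSet_lt measurable_const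
    apply Finset.measurable_sum
    intro j _
    exact ((hφ.comp (hf.iterate j)).sub measurable_const).max measurable_const
  have hset : {x | t < excessSum f φ u κ x} =
      (⋃ n : ℕ, ({x | hitIter f (Uset φ u) κ x = (n : ℕ∞)} ∩
        {x : X | t < ∑ j ∈ Finset.range (n + 1), max (φ (f^[j] x) - u) 0})) ∪
      ({x | hitIter f (Uset φ u) κ x = ⊤} ∩
        {x : X | t < ∑ j ∈ Finset.range (0 + 1), max (φ (f^[j] x) - u) 0}) := by
    ext x
    simp only [Set.mem_setOf_eq, Set.mem_union, Set.mem_iUnion, Set.mem_inter_iff]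
    by_cases htop : hitIter f (Uset φ u) κ x = ⊤
    · have : excessSum f φ u κ x = ∑ j ∈ Finset.range (0 + 1), max (φ (f^[j] x) - u) 0 := by
        unfold excessSum
        rw [htop]
        simp
      rw [this]
      constructor
      · intro h; exact Or.inr ⟨htop, h⟩
      · rintro (⟨n, hn, h⟩ | ⟨-, h⟩)
        · rw [htop] at hn; exact absurd hn.symm (by simp)
        · exact h
    · obtain ⟨n, hn0⟩ := WithTop.ne_top_iff_exists.mp htop
      have hn : hitIter f (Uset φ u) κ x = ((n : ℕ) : ℕ∞) := hn0.symm
      have : excessSum f φ u κ x = ∑ j ∈ Finset.range (n + 1), max (φ (f^[j] x) - u) 0 := by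
        unfold excessSum
        rw [hn, ENat.toNat_coe]
      rw [this]
      constructor
      · intro h; exact Or.inl ⟨n, hn, h⟩
      · rintro (⟨n', hn', h⟩ | ⟨h, -⟩)
        · have : n' = n := by rw [hn] at hn'; exact_mod_cast hn'.symm
          subst this
          exact h
        · exact absurd h htop
  rw [hset]
  refine MeasurableSet.union ?_ ?_
  · exact MeasurableSet.iUnion fun n =>
      (measurableSet_hitIter_eq hf (measurableSet_Uset hφ) κ n).inter (hE n)
  · exact (measurableSet_hitIter_top hf (measurableSet_Uset hφ) κ).inter (hE 0)

lemma measurableSet_Uk (hf : Measurable f) (hφ : Measurable φ) (κ : ℕ) :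
    MeasurableSet (Uk f φ p u κ t) :=
  (measurableSet_Qk hf hφ κ).inter (measurableSet_excess_gt hf hφ κ)

lemma measurableSet_U0 (hf : Measurable f) (hφ : Measurable φ) :
    MeasurableSet (U0 f φ p u t) :=
  (MeasurableSet.iUnion fun κ => measurableSet_Uk hf hφ κ).union (measurableSet_UpInf hf hφ)

lemma measurableSet_R0 (hf : Measurable f) (hφ : Measurable φ) :
    MeasurableSet (R0 f φ p u t) := by
  refine (measurableSet_U0 hf hφ).inter ?_
  have : {x | (p : ℕ∞) < hitTime f (U0 f φ p u t) x} =
      {x | hitTime f (U0 f φ p u t) x ≤ (p : ℕ∞)}ᶜ := by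
    ext x; simp [not_le]
  rw [this]
  exact (measurableSet_hitTime_le hf (measurableSet_U0 hf hφ) p).compl


end Meas
end AuxLemmas

/-- Statement 1 (Lemma estimating the probability of not entering `R_{p,0}(u,x)` during `[0,s)`). -/
theorem statement1 {X : Type*} [MeasurableSpace X] (μ : Measure X) [IsProbabilityMeasure μ]
    (f : X → X) (φ : X → ℝ) (hf : MeasurePreserving f μ μ) (hφ : Measurable φ)
    (p s : ℕ) (hs : 1 ≤ s) (t : ℝ) (ht : 0 ≤ t) (u : ℝ) :
    |(μ (⋂ i ∈ Finset.range s, f^[i] ⁻¹' (R0 f φ p u t)ᶜ)).toReal -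
        (1 - (s : ℝ) * (μ (R0 f φ p u t)).toReal)| ≤
      (s : ℝ) * ∑ j ∈ Finset.Ico (p + 1) s,
        (μ (Qk f φ p u 0 ∩ f^[j] ⁻¹' (U0 f φ p u t))).toReal := by
  classical
  have hfm : Measurable f := hf.measurable
  have hUm : MeasurableSet (U0 f φ p u t) := measurableSet_U0 hfm hφ
  have hRm : MeasurableSet (R0 f φ p u t) := measurableSet_R0 hfm hφ
  set B : ℕ → Set X := fun i => ⋂ j ∈ Finset.range i, f^[j] ⁻¹' (R0 f φ p u t)ᶜ with hBdef
  have hBm : ∀ i, MeasurableSet (B i) := fun i =>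
    MeasurableSet.biInter (Finset.range i).countable_toSet fun j _ => (hfm.iterate j) hRm.compl
  have hBsucc : ∀ i, B (i + 1) = B i \ f^[i] ⁻¹' (R0 f φ p u t) := by
    intro i
    ext x
    simp only [hBdef, Set.mem_iInter, Finset.mem_range, Set.mem_diff, Set.mem_preimage,
      Set.mem_compl_iff]
    constructor
    · intro h
      exact ⟨fun j hj => h j (by omega), h i (by omega)⟩
    · rintro ⟨h1, h2⟩ j hj
      rcases Nat.lt_succ_iff_lt_or_eq.mp hj with h | h
      · exact h1 j h
      · subst h; exact h2
  have hstep : ∀ i, μ (B i) = μ (B (i + 1)) + μ (B i ∩ f^[i] ⁻¹' (R0 f φ p u t)) := by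
    intro i
    rw [hBsucc i, add_comm]
    exact (measure_inter_add_diff (B i) ((hfm.iterate i) hRm)).symm
  set a : ℕ → ℝ := fun i => (μ (B i ∩ f^[i] ⁻¹' (R0 f φ p u t))).toReal with hadef
  set rr : ℝ := (μ (R0 f φ p u t)).toReal with hrrdef
  have hb : ∀ n, (μ (B n)).toReal = 1 - ∑ i ∈ Finset.range n, a i := by
    intro n
    induction n with
    | zero =>
      have hB0 : B 0 = Set.univ := by
        ext x; simp [hBdef]
      rw [hB0]
      simp
    | succ n IH =>
      have h1 : (μ (B n)).toReal = (μ (B (n + 1))).toReal + a n := by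
        rw [hstep n, ENNReal.toReal_add (measure_ne_top μ _) (measure_ne_top μ _)]
      rw [Finset.sum_range_succ]
      linarith
  have hpre : ∀ i, μ (f^[i] ⁻¹' (R0 f φ p u t)) = μ (R0 f φ p u t) := fun i =>
    (hf.iterate i).measure_preimage hRm.nullMeasurableSet
  have ha_le : ∀ i, a i ≤ rr := by
    intro i
    apply ENNReal.toReal_mono (measure_ne_top μ _)
    rw [← hpre i]
    exact measure_mono Set.inter_subset_right
  have hcover : ∀ i, i < s → f^[i] ⁻¹' (R0 f φ p u t) \ B i ⊆
      ⋃ c ∈ Finset.Ico (p + 1) s, f^[i - c] ⁻¹' (Qk f φ p u 0 ∩ f^[c] ⁻¹' (U0 f φ p u t)) := by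
    intro i his x hx
    obtain ⟨hxi, hxB⟩ := hx
    rw [Set.mem_preimage] at hxi
    have hj : ∃ j, j < i ∧ f^[j] x ∈ R0 f φ p u t := by
      by_contra hc
      push_neg at hc
      apply hxB
      simp only [hBdef, Set.mem_iInter, Finset.mem_range, Set.mem_preimage, Set.mem_compl_iff]
      exact fun j hj => hc j hj
    obtain ⟨j, hji, hjR⟩ := hj
    have hfkx : f^[i - j] (f^[j] x) ∈ U0 f φ p u t := by
      rw [← Function.iterate_add_apply, show i - j + j = i by omega]
      exact R0_subset hxi
    rcases le_or_gt (i - j) p with hle | hgt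
    · exfalso
      have hhit : hitTime f (U0 f φ p u t) (f^[j] x) ≤ ((p : ℕ) : ℕ∞) := by
        refine le_trans (hitTime_le_iff.mpr ⟨i - j, by omega, le_rfl, hfkx⟩) ?_
        exact_mod_cast hle
      exact absurd hhit (not_le.mpr hjR.2)
    · obtain ⟨d, hd, hdQ⟩ := key hjR hgt hfkx
      refine Set.mem_biUnion (show (i - j) - d ∈ Finset.Ico (p + 1) s from ?_) ?_
      · rw [Finset.mem_Ico]; omega
      · rw [Set.mem_preimage, show i - ((i - j) - d) = j + d by omega]
        refine ⟨?_, ?_⟩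
        · rw [show j + d = d + j by omega, Function.iterate_add_apply]
          exact hdQ
        · rw [Set.mem_preimage, ← Function.iterate_add_apply,
            show (i - j) - d + (j + d) = i by omega]
          exact R0_subset hxi
  have hQU : ∀ c : ℕ, MeasurableSet (Qk f φ p u 0 ∩ f^[c] ⁻¹' (U0 f φ p u t)) := fun c =>
    (measurableSet_Qk hfm hφ 0).inter ((hfm.iterate c) hUm)
  set E : ℝ := ∑ c ∈ Finset.Ico (p + 1) s,
      (μ (Qk f φ p u 0 ∩ f^[c] ⁻¹' (U0 f φ p u t))).toReal with hEdef
  have hbound : ∀ i, i < s → rr - a i ≤ E := by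
    intro i his
    have hsplit : μ (f^[i] ⁻¹' (R0 f φ p u t)) =
        μ (f^[i] ⁻¹' (R0 f φ p u t) ∩ B i) + μ (f^[i] ⁻¹' (R0 f φ p u t) \ B i) :=
      (measure_inter_add_diff _ (hBm i)).symm
    have hmeas_le : μ (f^[i] ⁻¹' (R0 f φ p u t) \ B i) ≤
        ∑ c ∈ Finset.Ico (p + 1) s, μ (Qk f φ p u 0 ∩ f^[c] ⁻¹' (U0 f φ p u t)) := by
      refine le_trans (measure_mono (hcover i his)) ?_
      refine le_trans (measure_biUnion_finset_le _ _) ?_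
      refine Finset.sum_le_sum fun c _ => ?_
      exact le_of_eq ((hf.iterate (i - c)).measure_preimage (hQU c).nullMeasurableSet)
    have hsum_ne : (∑ c ∈ Finset.Ico (p + 1) s,
        μ (Qk f φ p u 0 ∩ f^[c] ⁻¹' (U0 f φ p u t))) ≠ ⊤ := by
      refine (ENNReal.sum_lt_top.mpr fun c _ => ?_).ne
      exact (measure_lt_top μ _)
    have h1 : (μ (f^[i] ⁻¹' (R0 f φ p u t))).toReal =
        (μ (f^[i] ⁻¹' (R0 f φ p u t) ∩ B i)).toReal +
        (μ (f^[i] ⁻¹' (R0 f φ p u t) \ B i)).toReal := by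
      rw [hsplit, ENNReal.toReal_add (measure_ne_top μ _) (measure_ne_top μ _)]
    have h2 : (μ (f^[i] ⁻¹' (R0 f φ p u t) \ B i)).toReal ≤ E := by
      refine le_trans (ENNReal.toReal_mono hsum_ne hmeas_le) ?_
      rw [hEdef, ENNReal.toReal_sum fun c _ => measure_ne_top μ _]
    have h3 : (μ (f^[i] ⁻¹' (R0 f φ p u t))).toReal = rr := by
      rw [hpre i]
    have h4 : (μ (f^[i] ⁻¹' (R0 f φ p u t) ∩ B i)).toReal = a i := by
      rw [Set.inter_comm]
    linarith
  rw [hb s]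
  have hsum_eq : (1 - ∑ i ∈ Finset.range s, a i) - (1 - (s : ℝ) * rr) =
      ∑ i ∈ Finset.range s, (rr - a i) := by
    rw [Finset.sum_sub_distrib, Finset.sum_const, Finset.card_range]
    push_cast
    ring
  rw [hsum_eq, abs_of_nonneg (Finset.sum_nonneg fun i _ => sub_nonneg.mpr (ha_le i))]
  calc ∑ i ∈ Finset.range s, (rr - a i)
      ≤ ∑ _i ∈ Finset.range s, E :=
        Finset.sum_le_sum fun i hi => hbound i (Finset.mem_range.mp hi)
    _ = (s : ℝ) * E := by
        rw [Finset.sum_const, Finset.card_range, nsmul_eq_mul]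


end Paper
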